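/- Assume r = 10 and let e be a (−1)-class. Then e − K ∈ Q, while for every real t ≥ 0 with t ≠ 1 one has te − K ∉ Q̄. Consequently each (−1)-class spans a ray lying on the boundary of the cone Q̄ + ℝ_{≥0}·K: e belongs to Q̄ + ℝ_{≥0}·K but not to its topological interior. -/
import Mathlib


open scoped BigOperators

/-- The Minkowski intersection form of signature (1,r) on `ℝ^{r+1}`:
`⟨u,v⟩ = u₀v₀ − u₁v₁ − ⋯ − u_r v_r`. -/
noncomputable def mform (r : ℕ) (u v : Fin (r + 1) → ℝ) : ℝ :=
  u 0 * v 0 - ∑ i : Fin r, u i.succ * v i.succ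

/-- The class `L = (1,0,…,0)` of a line. -/
def lclass (r : ℕ) : Fin (r + 1) → ℝ := fun i => if i = 0 then 1 else 0

/-- The canonical class `K = (−3,1,…,1)`. -/
def kclass (r : ℕ) : Fin (r + 1) → ℝ := fun i => if i = 0 then -3 else 1

/-- `Q = {α : ⟨α,α⟩ ≥ 0, ⟨α,L⟩ > 0}`. -/
def Qset (r : ℕ) : Set (Fin (r + 1) → ℝ) :=
  {α | 0 ≤ mform r α α ∧ 0 < mform r α (lclass r)}

/-- `Q̄ = {α : ⟨α,α⟩ ≥ 0, ⟨α,L⟩ ≥ 0}`. -/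
def Qbar (r : ℕ) : Set (Fin (r + 1) → ℝ) :=
  {α | 0 ≤ mform r α α ∧ 0 ≤ mform r α (lclass r)}


lemma mform_comm (r : ℕ) (u v : Fin (r+1) → ℝ) : mform r u v = mform r v u := by
  unfold mform
  rw [mul_comm]
  congr 1
  exact Finset.sum_congr rfl fun i _ => mul_comm _ _

lemma mform_add_left (r : ℕ) (u w v : Fin (r+1) → ℝ) :
    mform r (u + w) v = mform r u v + mform r w v := by
  unfold mform
  simp only [Pi.add_apply, add_mul, Finset.sum_add_distrib]
  ring

lemma mform_smul_left (r : ℕ) (c : ℝ) (u v : Fin (r+1) → ℝ) :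
    mform r (c • u) v = c * mform r u v := by
  unfold mform
  simp only [Pi.smul_apply, smul_eq_mul, mul_assoc, ← Finset.mul_sum]
  ring

lemma mform_sub_left (r : ℕ) (u w v : Fin (r+1) → ℝ) :
    mform r (u - w) v = mform r u v - mform r w v := by
  unfold mform
  simp only [Pi.sub_apply, sub_mul, Finset.sum_sub_distrib]
  ring

lemma mform_add_right (r : ℕ) (u w v : Fin (r+1) → ℝ) :
    mform r v (u + w) = mform r v u + mform r v w := by
  rw [mform_comm, mform_add_left, mform_comm r u, mform_comm r w]

lemma mform_smul_right (r : ℕ) (c : ℝ) (u v : Fin (r+1) → ℝ) :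
    mform r v (c • u) = c * mform r v u := by
  rw [mform_comm, mform_smul_left, mform_comm]

lemma mform_sub_right (r : ℕ) (u w v : Fin (r+1) → ℝ) :
    mform r v (u - w) = mform r v u - mform r v w := by
  rw [mform_comm, mform_sub_left, mform_comm r u, mform_comm r w]

lemma mform_L (r : ℕ) (x : Fin (r+1) → ℝ) : mform r x (lclass r) = x 0 := by
  simp [mform, lclass, Fin.succ_ne_zero]

lemma mform_K (r : ℕ) (x : Fin (r+1) → ℝ) :
    mform r x (kclass r) = -3 * x 0 - ∑ i : Fin r, x i.succ := by
  simp [mform, kclass, Fin.succ_ne_zero]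
  ring

lemma mform_KK : mform 10 (kclass 10) (kclass 10) = -1 := by
  rw [mform_K]
  simp [kclass, Fin.succ_ne_zero]
  norm_num

noncomputable def psing (r : ℕ) (i : Fin r) : Fin (r+1) → ℝ := Pi.single i.succ 1

lemma psing_zero (r : ℕ) (i : Fin r) : psing r i 0 = 0 := by
  unfold psing
  exact Pi.single_eq_of_ne (Ne.symm (Fin.succ_ne_zero i)) 1

lemma psing_succ (r : ℕ) (i m : Fin r) : psing r i m.succ = if m = i then 1 else 0 := by
  unfold psing
  rw [Pi.single_apply]
  simp [Fin.succ_inj]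

lemma mform_single_right (r : ℕ) (x : Fin (r+1) → ℝ) (i : Fin r) :
    mform r x (psing r i) = -(x i.succ) := by
  unfold mform
  rw [psing_zero, mul_zero, zero_sub, neg_inj]
  have h : ∀ m : Fin r, x m.succ * psing r i m.succ = if m = i then x m.succ else 0 := by
    intro m
    rw [psing_succ]
    split_ifs <;> simp
  rw [Finset.sum_congr rfl fun m _ => h m, Finset.sum_ite_eq' Finset.univ]
  simp

theorem stmt9 (r : ℕ) (hr : r = 10) (e : Fin (r + 1) → ℝ)
    (hee : mform r e e = -1) (heK : mform r e (kclass r) = -1)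
    (heL : 0 ≤ mform r e (lclass r)) :
    (e - kclass r ∈ Qset r) ∧
    (∀ t : ℝ, 0 ≤ t → t ≠ 1 → t • e - kclass r ∉ Qbar r) ∧
    (e ∈ {x : Fin (r + 1) → ℝ | ∃ q ∈ Qbar r, ∃ t : ℝ, 0 ≤ t ∧ x = q + t • kclass r}) ∧
    (e ∉ interior {x : Fin (r + 1) → ℝ | ∃ q ∈ Qbar r, ∃ t : ℝ, 0 ≤ t ∧ x = q + t • kclass r}) := by
  subst hr
  rw [mform_L] at heL
  have hKe : mform 10 (kclass 10) e = -1 := by rw [mform_comm]; exact heK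
  -- Part 1
  have p1a : mform 10 (e - kclass 10) (e - kclass 10) = 0 := by
    rw [mform_sub_left, mform_sub_right, mform_sub_right, hee, heK, hKe, mform_KK]; ring
  have p1b : 0 < mform 10 (e - kclass 10) (lclass 10) := by
    rw [mform_sub_left, mform_L, mform_L]
    have hk0 : kclass 10 0 = -3 := by norm_num [kclass]
    rw [hk0]; linarith
  have part1 : e - kclass 10 ∈ Qset 10 := ⟨le_of_eq p1a.symm, p1b⟩
  refine ⟨part1, ?_, ?_, ?_⟩
  · -- Part 2
    intro t ht htne ⟨hq1, _⟩
    simp only [mform_sub_left, mform_sub_right, mform_smul_left, mform_smul_right,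
      hee, heK, hKe, mform_KK] at hq1
    have hne : t - 1 ≠ 0 := sub_ne_zero.mpr htne
    nlinarith [sq_pos_of_ne_zero hne, sq_nonneg (t - 1)]
  · -- Part 3
    exact ⟨e - kclass 10, ⟨part1.1, le_of_lt part1.2⟩, 1, zero_le_one, by simp⟩
  · -- Part 4
    intro hmem
    -- the coordinates e 1, ..., e 10 are not all equal
    have hee' : e 0 * e 0 - ∑ i : Fin 10, e i.succ * e i.succ = -1 := hee
    have heK' : -3 * e 0 - ∑ i : Fin 10, e i.succ = -1 := by rw [← mform_K]; exact heK
    have hex : ∃ i j : Fin 10, e i.succ ≠ e j.succ := by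
      by_contra h
      push_neg at h
      have h1 : ∑ i : Fin 10, e i.succ = 10 * e (0 : Fin 10).succ := by
        rw [Finset.sum_congr rfl fun i _ => h i 0]; simp
      have h2 : ∑ i : Fin 10, e i.succ * e i.succ
          = 10 * (e (0 : Fin 10).succ * e (0 : Fin 10).succ) := by
        rw [Finset.sum_congr rfl fun i _ => by rw [h i 0]]; simp
      rw [h1] at heK'
      rw [h2] at hee'
      nlinarith [sq_nonneg (e 0 + 3)]
    obtain ⟨i, j, hij⟩ := hex
    have hijne : i ≠ j := fun h => hij (by rw [h])
    have hkex : ∃ k : Fin 10, k ≠ i ∧ k ≠ j := by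
      by_contra h
      push_neg at h
      have hsub : (Finset.univ : Finset (Fin 10)) ⊆ {i, j} := by
        intro k _
        rcases eq_or_ne k i with rfl | hk
        · simp
        · simp [h k hk]
      have hc := Finset.card_le_card hsub
      have hc2 : ({i, j} : Finset (Fin 10)).card ≤ 2 :=
        le_trans (Finset.card_insert_le _ _) (by simp)
      simp [Finset.card_univ] at hc
      omega
    obtain ⟨k, hki, hkj⟩ := hkex
    set A : ℝ := e j.succ - e k.succ with hA
    set B : ℝ := e k.succ - e i.succ with hB
    set C : ℝ := e i.succ - e j.succ with hC
    set v : Fin 11 → ℝ := A • psing 10 i + B • psing 10 j + C • psing 10 k with hv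
    have hxv : ∀ x : Fin 11 → ℝ,
        mform 10 x v = -(A * x i.succ + B * x j.succ + C * x k.succ) := by
      intro x
      rw [hv, mform_add_right, mform_add_right, mform_smul_right, mform_smul_right,
        mform_smul_right, mform_single_right, mform_single_right, mform_single_right]
      ring
    have hev : mform 10 e v = 0 := by rw [hxv]; ring
    have hKv : mform 10 (kclass 10) v = 0 := by
      rw [hxv]
      simp [kclass, Fin.succ_ne_zero]
      ring
    have hvi : v i.succ = A := by
      simp [hv, psing_succ, hijne, Ne.symm hki]
    have hvj : v j.succ = B := by
      simp [hv, psing_succ, Ne.symm hijne, Ne.symm hkj]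
    have hvk : v k.succ = C := by
      simp [hv, psing_succ, hki, hkj]
    have hvv : mform 10 v v = -(A * A + B * B + C * C) := by
      rw [hxv, hvi, hvj, hvk]
    have hve : mform 10 v e = 0 := by rw [mform_comm]; exact hev
    have hvK : mform 10 v (kclass 10) = 0 := by rw [mform_comm]; exact hKv
    -- get a ball around e inside the set
    rw [mem_interior_iff_mem_nhds, Metric.mem_nhds_iff] at hmem
    obtain ⟨ε, hε, hball⟩ := hmem
    set s : ℝ := ε / (‖v‖ + 1) with hs
    have hvnorm : (0:ℝ) < ‖v‖ + 1 := by positivity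
    have hspos : 0 < s := div_pos hε hvnorm
    have hxball : e + s • v ∈ Metric.ball e ε := by
      rw [Metric.mem_ball, dist_eq_norm, add_sub_cancel_left, norm_smul,
        Real.norm_eq_abs, abs_of_pos hspos]
      have h1 : s * ‖v‖ < s * (‖v‖ + 1) := by nlinarith
      have h2 : s * (‖v‖ + 1) = ε := by
        rw [hs]; field_simp
      linarith
    obtain ⟨q, ⟨hq1, _⟩, t, ht, hxeq⟩ := hball hxball
    have hqdef : q = e + s • v - t • kclass 10 := eq_sub_of_add_eq hxeq.symm
    rw [hqdef] at hq1
    simp only [mform_sub_left, mform_sub_right, mform_add_left, mform_add_right,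
      mform_smul_left, mform_smul_right, hee, heK, hKe, mform_KK, hev, hve, hKv, hvK,
      hvv] at hq1
    have hC0 : C ≠ 0 := sub_ne_zero.mpr hij
    nlinarith [sq_nonneg (t - 1), sq_pos_of_ne_zero hC0, sq_nonneg A, sq_nonneg B,
      mul_pos (mul_pos hspos hspos) (sq_pos_of_ne_zero hC0), sq_nonneg (s * C)]
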